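/- Let X be a real reflexive Banach space and let C ⊆ X be a nonempty closed convex set. If C has the separation property and barc(C) = Int barc(C) ∪ {0}, then C has the strong separation property. -/

import Mathlib

open Pointwise


/-- The barrier cone of a set `C` in a normed space. -/
def barrierCone {X : Type*} [NormedAddCommGroup X] [NormedSpace ℝ X] (C : Set X) :
    Set (X →L[ℝ] ℝ) :=
  {f | ∃ b : ℝ, ∀ c ∈ C, f c ≤ b}

/-- `C` and `D` are separated: there is a nonzero continuous linear functional whose supremum
over `C` is at most its infimum over `D`. -/
def Separated {X : Type*} [NormedAddCommGroup X] [NormedSpace ℝ X] (C D : Set X) : Prop :=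
  ∃ f : X →L[ℝ] ℝ, f ≠ 0 ∧ ∃ a : ℝ, (∀ c ∈ C, f c ≤ a) ∧ ∀ d ∈ D, a ≤ f d

/-- `C` and `D` are strongly separated. -/
def StronglySeparated {X : Type*} [NormedAddCommGroup X] [NormedSpace ℝ X]
    (C D : Set X) : Prop :=
  ∃ f : X →L[ℝ] ℝ, f ≠ 0 ∧ ∃ a b : ℝ, a < b ∧ (∀ c ∈ C, f c ≤ a) ∧ ∀ d ∈ D, b ≤ f d

/-- `C` has the separation property. -/
def SepProperty {X : Type*} [NormedAddCommGroup X] [NormedSpace ℝ X] (C : Set X) : Prop :=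
  ∀ D : Set X, D.Nonempty → IsClosed D → Convex ℝ D → Disjoint C D → Separated C D

/-- `C` has the strong separation property. -/
def StrongSepProperty {X : Type*} [NormedAddCommGroup X] [NormedSpace ℝ X]
    (C : Set X) : Prop :=
  ∀ D : Set X, D.Nonempty → IsClosed D → Convex ℝ D → Disjoint C D → StronglySeparated C D

/-- If `C` and `D` are at positive distance and `C` has the separation property, then `C` and
`D` are strongly separated. -/
lemma strongSep_of_far {X : Type*} [NormedAddCommGroup X] [NormedSpace ℝ X]
    (C : Set X) (hsep : SepProperty C) (D : Set X) (hDne : D.Nonempty)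
    (hDconv : Convex ℝ D)
    {ε : ℝ} (hε : 0 < ε) (hfar : ∀ c ∈ C, ∀ d ∈ D, ε ≤ ‖c - d‖) :
    StronglySeparated C D := by
  have hr0 : 0 < ε / 2 := by positivity
  set D' := closure (D + Metric.closedBall (0 : X) (ε / 2)) with hD'
  have hsub : D + Metric.closedBall (0 : X) (ε / 2) ⊆ D' := subset_closure
  obtain ⟨d₀, hd₀⟩ := hDne
  have hD'ne : D'.Nonempty :=
    ⟨d₀ + 0, hsub (Set.add_mem_add hd₀ (Metric.mem_closedBall_self hr0.le))⟩
  have hD'cl : IsClosed D' := isClosed_closure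
  have hD'conv : Convex ℝ D' := (hDconv.add (convex_closedBall _ _)).closure
  have hD'disj : Disjoint C D' := by
    rw [Set.disjoint_left]
    intro x hxC hxD'
    obtain ⟨y, hy, hxy⟩ := Metric.mem_closure_iff.mp hxD' (ε / 2) hr0
    obtain ⟨d, hd, v, hv, rfl⟩ := Set.mem_add.mp hy
    have h1 : ‖x - d‖ ≤ ‖x - (d + v)‖ + ‖v‖ := by
      have e : x - d = (x - (d + v)) + v := by abel
      rw [e]; exact norm_add_le _ _
    have h2 : ‖x - (d + v)‖ < ε / 2 := by rwa [← dist_eq_norm]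
    have h3 : ‖v‖ ≤ ε / 2 := by simpa using hv
    have h4 := hfar x hxC d hd
    linarith
  obtain ⟨g, hg0, b, hgC, hgD'⟩ := hsep D' hD'ne hD'cl hD'conv hD'disj
  obtain ⟨x₀, hx₀⟩ : ∃ x₀, g x₀ ≠ 0 := by
    by_contra h
    push_neg at h
    exact hg0 (ContinuousLinearMap.ext fun x => by simpa using h x)
  obtain ⟨x₁, hx₁⟩ : ∃ x₁, 0 < g x₁ := by
    rcases lt_or_gt_of_ne hx₀ with h | h
    · exact ⟨-x₀, by simpa using h⟩
    · exact ⟨x₀, h⟩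
  have hx₁0 : x₁ ≠ 0 := by
    intro h; rw [h] at hx₁; simp at hx₁
  have hnx₁ : (0:ℝ) < ‖x₁‖ := norm_pos_iff.mpr hx₁0
  set v : X := -((ε / 2 / ‖x₁‖) • x₁) with hv
  have hvr : ‖v‖ ≤ ε / 2 := by
    rw [hv, norm_neg, norm_smul, Real.norm_eq_abs, abs_of_pos (by positivity)]
    rw [div_mul_cancel₀ _ (ne_of_gt hnx₁)]
  set s : ℝ := (ε / 2 / ‖x₁‖) * g x₁ with hs
  have hs0 : 0 < s := mul_pos (by positivity) hx₁
  have hgv : g v = -s := by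
    rw [hv, map_neg, map_smul, smul_eq_mul, hs]
  refine ⟨g, hg0, b, b + s, by linarith, hgC, fun d hd => ?_⟩
  have hmem : d + v ∈ D' := by
    refine hsub (Set.add_mem_add hd ?_)
    rwa [Metric.mem_closedBall, dist_zero_right]
  have h5 := hgD' _ hmem
  rw [map_add, hgv] at h5
  linarith

set_option maxHeartbeats 1000000 in
set_option synthInstance.maxHeartbeats 400000 in
/-- In a real reflexive Banach space, a nonempty closed convex set with the
separation property such that `barc(C) = Int barc(C) ∪ {0}` has the strong separation
property. -/
theorem statement10 {X : Type*} [NormedAddCommGroup X] [NormedSpace ℝ X] [CompleteSpace X]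
    (hrefl : Function.Surjective (NormedSpace.inclusionInDoubleDual ℝ X))
    (C : Set X) (hne : C.Nonempty) (hcl : IsClosed C) (hconv : Convex ℝ C)
    (hsep : SepProperty C)
    (hbar : barrierCone C = interior (barrierCone C) ∪ {0}) :
    StrongSepProperty C := by
  intro D hDne hDcl hDconv hdisj
  by_cases hpos : ∃ ε > 0, ∀ c ∈ C, ∀ d ∈ D, ε ≤ ‖c - d‖
  · obtain ⟨ε, hε, hfar⟩ := hpos
    exact strongSep_of_far C hsep D hDne hDconv hε hfar
  · exfalso
    push_neg at hpos
    obtain ⟨f, hf0, a, hfC, hfD⟩ := hsep D hDne hDcl hDconv hdisj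
    have hfbar : f ∈ barrierCone C := ⟨a, hfC⟩
    have hfint : f ∈ interior (barrierCone C) := by
      rw [hbar] at hfbar
      rcases hfbar with h | h
      · exact h
      · exact absurd h hf0
    obtain ⟨δ₀, hδ₀, hball⟩ := Metric.isOpen_iff.mp isOpen_interior f hfint
    have hballbar : Metric.ball f δ₀ ⊆ barrierCone C := hball.trans interior_subset
    -- sequences of points at distance tending to 0
    have hseq : ∀ n : ℕ, ∃ c' ∈ C, ∃ d' ∈ D,
        ‖c' - d'‖ < min (1/((n:ℝ)+1)) (1/(‖f‖+1)) := by
      intro n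
      refine hpos _ (lt_min (by positivity) (by positivity))
    choose c hcC d hdD hcd using hseq
    -- Baire category argument: support function locally bounded near f
    have hTclosed : ∀ n : ℕ, IsClosed {g : X →L[ℝ] ℝ | ∀ c' ∈ C, g c' ≤ (n:ℝ)} := by
      intro n
      have e : {g : X →L[ℝ] ℝ | ∀ c' ∈ C, g c' ≤ (n:ℝ)}
          = ⋂ c' ∈ C, {g : X →L[ℝ] ℝ | g c' ≤ (n:ℝ)} := by
        ext g; simp
      rw [e]
      exact isClosed_biInter fun c' _ =>
        isClosed_le (ContinuousLinearMap.apply ℝ ℝ c').continuous continuous_const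
    have hFcover : (⋃ n : ℕ,
        ({g : X →L[ℝ] ℝ | ∀ c' ∈ C, g c' ≤ (n:ℝ)} ∪ (Metric.ball f δ₀)ᶜ)) = Set.univ := by
      apply Set.eq_univ_of_forall
      intro g
      by_cases hg : g ∈ Metric.ball f δ₀
      · obtain ⟨b', hb'⟩ := hballbar hg
        obtain ⟨n, hn⟩ := exists_nat_ge b'
        exact Set.mem_iUnion.mpr ⟨n, Or.inl fun c' hc' => (hb' c' hc').trans hn⟩
      · exact Set.mem_iUnion.mpr ⟨0, Or.inr hg⟩
    haveI : BaireSpace (X →L[ℝ] ℝ) := inferInstance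
    have hdense := dense_iUnion_interior_of_closed
      (fun n : ℕ => (hTclosed n).union Metric.isOpen_ball.isClosed_compl) hFcover
    obtain ⟨g₀, hg₀mem, hg₀ball⟩ :=
      hdense.exists_mem_open Metric.isOpen_ball ⟨f, Metric.mem_ball_self hδ₀⟩
    obtain ⟨m, hg₀int⟩ := Set.mem_iUnion.mp hg₀mem
    have hnhds : interior ({g : X →L[ℝ] ℝ | ∀ c' ∈ C, g c' ≤ (m:ℝ)} ∪ (Metric.ball f δ₀)ᶜ)
        ∩ Metric.ball f δ₀ ∈ nhds g₀ :=
      (isOpen_interior.inter Metric.isOpen_ball).mem_nhds ⟨hg₀int, hg₀ball⟩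
    obtain ⟨ρ, hρ0, hρ⟩ := Metric.mem_nhds_iff.mp hnhds
    have hTn : Metric.ball g₀ ρ ⊆ {g : X →L[ℝ] ℝ | ∀ c' ∈ C, g c' ≤ (m:ℝ)} := by
      intro h hh
      obtain ⟨h1, h2⟩ := hρ hh
      rcases interior_subset h1 with h3 | h3
      · exact h3
      · exact absurd h2 h3
    -- the symmetric point g₁ = 2f - g₀ is in the barrier cone
    have hg₁ball : f + (f - g₀) ∈ Metric.ball f δ₀ := by
      rw [Metric.mem_ball, dist_eq_norm]
      have e : f + (f - g₀) - f = f - g₀ := by abel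
      rw [e, ← dist_eq_norm, dist_comm]
      exact Metric.mem_ball.mp hg₀ball
    obtain ⟨b₁, hb₁⟩ := hballbar hg₁ball
    set M : ℝ := ((m:ℝ) + b₁)/2 with hM
    have hbnd : ∀ c' ∈ C, ∀ h : X →L[ℝ] ℝ, ‖h‖ < ρ/2 → f c' + h c' ≤ M := by
      intro c' hc' h hh
      have h1 : g₀ + (2:ℝ) • h ∈ Metric.ball g₀ ρ := by
        rw [Metric.mem_ball, dist_eq_norm]
        rw [add_sub_cancel_left]
        have en := norm_smul (2:ℝ) h
        rw [en, Real.norm_eq_abs]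
        rw [abs_of_pos (by norm_num : (0:ℝ) < 2)]
        linarith
      have h2 := hTn h1 c' hc'
      have h3 := hb₁ c' hc'
      have e2 : (g₀ + (2:ℝ) • h) c' = g₀ c' + 2 * h c' := by
        simp [ContinuousLinearMap.add_apply, ContinuousLinearMap.smul_apply, smul_eq_mul]
      have e3 : (f + (f - g₀)) c' = f c' + (f c' - g₀ c') := by
        simp [ContinuousLinearMap.add_apply, ContinuousLinearMap.sub_apply]
      rw [e2] at h2
      rw [e3] at h3
      rw [hM]
      linarith
    set R : ℝ := max 0 ((M - a + 1)/(ρ/4)) with hR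
    have hslab : ∀ c' ∈ C, a - 1 ≤ f c' → ‖c'‖ ≤ R := by
      intro c' hc' hfc'
      rcases eq_or_ne c' 0 with rfl | h0
      · rw [norm_zero]; exact le_max_left _ _
      obtain ⟨φ, hφ1, hφ2⟩ := exists_dual_vector ℝ c' (norm_ne_zero_iff.mpr h0)
      have hφ2' : φ c' = ‖c'‖ := by exact_mod_cast hφ2
      have hnφ : ‖(ρ/4 : ℝ) • φ‖ < ρ/2 := by
        have en := norm_smul (ρ/4 : ℝ) φ
        rw [en, hφ1, Real.norm_eq_abs, abs_of_pos (by positivity), mul_one]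
        linarith
      have hb := hbnd c' hc' ((ρ/4 : ℝ) • φ) hnφ
      have e : ((ρ/4 : ℝ) • φ) c' = (ρ/4) * ‖c'‖ := by
        rw [ContinuousLinearMap.smul_apply, smul_eq_mul, hφ2']
      rw [e] at hb
      have h5 : ‖c'‖ ≤ (M - a + 1)/(ρ/4) := by
        rw [le_div_iff₀ (by positivity), mul_comm]
        linarith
      exact h5.trans (le_max_right _ _)
    -- all points of the sequence c lie in the bounded slab
    have hcslab : ∀ n : ℕ, a - 1 ≤ f (c n) := by
      intro n
      have h1 : f (d n) - f (c n) ≤ ‖f‖ * ‖c n - d n‖ := by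
        have e : f (d n) - f (c n) = f (d n - c n) := by rw [map_sub]
        rw [e]
        calc f (d n - c n) ≤ ‖f (d n - c n)‖ := le_abs_self _
          _ ≤ ‖f‖ * ‖d n - c n‖ := f.le_opNorm _
          _ = ‖f‖ * ‖c n - d n‖ := by rw [norm_sub_rev]
      have h2 : ‖c n - d n‖ ≤ 1/(‖f‖+1) := ((hcd n).trans_le (min_le_right _ _)).le
      have h3 : ‖f‖ * ‖c n - d n‖ ≤ ‖f‖ * (1/(‖f‖+1)) :=
        mul_le_mul_of_nonneg_left h2 (norm_nonneg f)
      have h4 : ‖f‖ * (1/(‖f‖+1)) < 1 := by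
        rw [mul_one_div]
        rw [div_lt_one (by positivity)]
        linarith
      have h5 := hfD (d n) (hdD n)
      linarith
    have hcball : ∀ n, ‖c n‖ ≤ R := fun n => hslab _ (hcC n) (hcslab n)
    -- weak-* compactness of the ball in the double dual (Banach–Alaoglu)
    set u : ℕ → WeakDual ℝ (X →L[ℝ] ℝ) :=
      fun n => StrongDual.toWeakDual (NormedSpace.inclusionInDoubleDual ℝ X (c n)) with hu
    have hK := WeakDual.isCompact_closedBall (𝕜 := ℝ) (E := X →L[ℝ] ℝ) 0 R
    have hle : Filter.map u Filter.atTop ≤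
        Filter.principal (WeakDual.toStrongDual ⁻¹' Metric.closedBall 0 R) := by
      rw [Filter.le_principal_iff, Filter.mem_map]
      apply Filter.Eventually.of_forall
      intro n
      show u n ∈ _
      rw [hu]
      simp only [Set.mem_preimage]
      have e : WeakDual.toStrongDual
          (StrongDual.toWeakDual (NormedSpace.inclusionInDoubleDual ℝ X (c n)))
          = NormedSpace.inclusionInDoubleDual ℝ X (c n) := rfl
      rw [e, Metric.mem_closedBall]
      exact (dist_zero_right (NormedSpace.inclusionInDoubleDual ℝ X (c n))).le.trans
        ((NormedSpace.double_dual_bound ℝ X (c n)).trans (hcball n))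
    haveI : (Filter.map u Filter.atTop).NeBot := Filter.map_neBot
    obtain ⟨z, hzK, hz⟩ := hK.exists_clusterPt hle
    obtain ⟨xb, hxb⟩ := hrefl (WeakDual.toStrongDual z)
    have hzg : ∀ g : X →L[ℝ] ℝ, z g = g xb := by
      intro g
      have e2 := DFunLike.congr_fun hxb g
      exact e2.symm
    have huapp : ∀ (n : ℕ) (g : X →L[ℝ] ℝ), u n g = g (c n) := fun n g => rfl
    have hfreq : ∀ (g : X →L[ℝ] ℝ) (t : ℝ), t < g xb →
        ∃ᶠ n in Filter.atTop, t < g (c n) := by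
      intro g t ht
      have hopen : IsOpen {w : WeakDual ℝ (X →L[ℝ] ℝ) | t < w g} :=
        isOpen_Ioi.preimage (WeakDual.eval_continuous g)
      have hU : {w : WeakDual ℝ (X →L[ℝ] ℝ) | t < w g} ∈ nhds z := by
        refine hopen.mem_nhds ?_
        show t < z g
        rw [hzg g]; exact ht
      by_contra hcon
      rw [Filter.not_frequently] at hcon
      have hV : {w : WeakDual ℝ (X →L[ℝ] ℝ) | t < w g}ᶜ ∈ Filter.map u Filter.atTop := by
        rw [Filter.mem_map]
        filter_upwards [hcon] with n hn
        show ¬ t < u n g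
        rw [huapp n g]
        exact hn
      obtain ⟨y, hy1, hy2⟩ := clusterPt_iff_nonempty.mp hz hU hV
      exact hy2 hy1
    have hxbC : xb ∈ C := by
      by_contra hxc
      obtain ⟨g, t, hgC, hgx⟩ := geometric_hahn_banach_closed_point hconv hcl hxc
      obtain ⟨n, hn⟩ := (hfreq g t hgx).exists
      exact absurd hn (not_lt.mpr (hgC (c n) (hcC n)).le)
    have hxbD : xb ∈ D := by
      by_contra hxd
      obtain ⟨g, t, hgD, hgx⟩ := geometric_hahn_banach_closed_point hDconv hDcl hxd
      set t' : ℝ := (t + g xb)/2 with ht'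
      have ht'1 : t < t' := by rw [ht']; linarith
      have ht'2 : t' < g xb := by rw [ht']; linarith
      have h0 : Filter.Tendsto (fun n : ℕ => ‖g‖ * (1/((n:ℝ)+1))) Filter.atTop
          (nhds (‖g‖ * 0)) :=
        tendsto_const_nhds.mul tendsto_one_div_add_atTop_nhds_zero_nat
      rw [mul_zero] at h0
      have hevs : ∀ᶠ n : ℕ in Filter.atTop, ‖g‖ * (1/((n:ℝ)+1)) < t' - t :=
        h0.eventually_lt_const (by linarith)
      have hev : ∀ᶠ n in Filter.atTop, g (c n) < t' := by
        filter_upwards [hevs] with n hn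
        have hgd := hgD (d n) (hdD n)
        have h1 : g (c n) - g (d n) ≤ ‖g‖ * ‖c n - d n‖ := by
          have e : g (c n) - g (d n) = g (c n - d n) := by rw [map_sub]
          rw [e]
          calc g (c n - d n) ≤ ‖g (c n - d n)‖ := le_abs_self _
            _ ≤ ‖g‖ * ‖c n - d n‖ := g.le_opNorm _
        have h2 : ‖c n - d n‖ ≤ 1/((n:ℝ)+1) := ((hcd n).trans_le (min_le_left _ _)).le
        have h3 : ‖g‖ * ‖c n - d n‖ ≤ ‖g‖ * (1/((n:ℝ)+1)) :=
          mul_le_mul_of_nonneg_left h2 (norm_nonneg g)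
        linarith
      obtain ⟨n, hn1, hn2⟩ := ((hfreq g t' ht'2).and_eventually hev).exists
      linarith
    exact Set.disjoint_left.mp hdisj hxbC hxbD
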